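/- arXiv:2103.05762 — 2 statements merged into one kernel-verified Lean document; each statement's English description precedes it below -/
import Mathlib

section
/- Let p be a prime, F : F_{p^n} → F_{p^m}, c ∈ F_{p^m}. For u ∈ F_{p^n} and b ∈ F_{p^m}, define the c-autocorrelation _cC_F(u,b) = Σ_{x ∈ F_{p^n}} ζ^{Tr_m(b(F(x+u) - c·F(x)))}, and the Walsh transform W_F(a,b) = Σ_{x ∈ F_{p^n}} ζ^{Tr_m(bF(x)) - Tr_n(ax)}. Then for all x ∈ F_{p^n} and b ∈ F_{p^m}: Σ_{u ∈ F_{p^n}} _cC_F(u,b) · ζ^{-Tr_n(ux)} = W_F(x,b) · conj(W_F(x,bc)). -/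
open Finset Complex

noncomputable def zeta (p : ℕ) : ℂ := Complex.exp (2 * Real.pi * Complex.I / p)

noncomputable def absTr (p : ℕ) (K : Type) [Field K] [Fintype K] [CharP K p] : K → ZMod p :=
  letI := ZMod.algebra K p
  Algebra.trace (ZMod p) K

lemma absTr_sub (p : ℕ) (K : Type) [Field K] [Fintype K] [CharP K p] (a b : K) :
    absTr p K (a - b) = absTr p K a - absTr p K b := by
  unfold absTr
  exact map_sub _ _ _

lemma zeta_pow_p {p : ℕ} (hp : p ≠ 0) : zeta p ^ p = 1 := by
  have hp' : (p:ℂ) ≠ 0 := Nat.cast_ne_zero.mpr hp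
  have h : (p:ℂ) * (2 * Real.pi * Complex.I / p) = 2 * Real.pi * Complex.I := by
    field_simp
  rw [zeta, ← Complex.exp_nat_mul, h, Complex.exp_two_pi_mul_I]

lemma zeta_pow_mod {p : ℕ} (hp : p ≠ 0) (k : ℕ) : zeta p ^ (k % p) = zeta p ^ k := by
  conv_rhs => rw [← Nat.div_add_mod k p]
  rw [pow_add, pow_mul, zeta_pow_p hp, one_pow, one_mul]

noncomputable def ee (p : ℕ) (a : ZMod p) : ℂ := zeta p ^ a.val

lemma ee_add {p : ℕ} [Fact p.Prime] (a b : ZMod p) : ee p (a + b) = ee p a * ee p b := by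
  have hp : p ≠ 0 := (Fact.out : p.Prime).ne_zero
  rw [ee, ee, ee, ZMod.val_add, zeta_pow_mod hp, pow_add]

lemma ee_zero {p : ℕ} [Fact p.Prime] : ee p 0 = 1 := by
  haveI : NeZero p := ⟨(Fact.out : p.Prime).ne_zero⟩
  simp [ee]

lemma abs_zeta {p : ℕ} (hp : p ≠ 0) : ‖zeta p‖ = 1 := by
  have : zeta p = Complex.exp (((2 * Real.pi / p : ℝ) : ℂ) * Complex.I) := by
    rw [zeta]; push_cast; ring_nf
  rw [this, Complex.norm_exp_ofReal_mul_I]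

lemma conj_ee {p : ℕ} [Fact p.Prime] (a : ZMod p) :
    (starRingEnd ℂ) (ee p a) = ee p (-a) := by
  have hp : p ≠ 0 := (Fact.out : p.Prime).ne_zero
  have h1 : ee p a * ee p (-a) = 1 := by rw [← ee_add, add_neg_cancel, ee_zero]
  have habs : ‖ee p a‖ = 1 := by
    rw [ee, norm_pow, abs_zeta hp, one_pow]
  have h2 : (starRingEnd ℂ) (ee p a) * ee p a = 1 := by
    rw [mul_comm, Complex.mul_conj, Complex.normSq_eq_norm_sq, habs]
    norm_num
  calc (starRingEnd ℂ) (ee p a) = (starRingEnd ℂ) (ee p a) * (ee p a * ee p (-a)) := by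
        rw [h1, mul_one]
    _ = ((starRingEnd ℂ) (ee p a) * ee p a) * ee p (-a) := by ring
    _ = ee p (-a) := by rw [h2, one_mul]

/-- Fourier relation between the c-autocorrelation and the Walsh transform:
`Σ_u cC_F(u,b) ζ^{-Tr_n(u x)} = W_F(x,b) conj (W_F(x, b c))`. -/
theorem stmt_4 (p n m : ℕ) [Fact p.Prime]
    (K L : Type) [Field K] [Fintype K] [CharP K p] [Field L] [Fintype L] [CharP L p]
    (hK : Fintype.card K = p ^ n) (hL : Fintype.card L = p ^ m)
    (F : K → L) (c : L) (x : K) (b : L) :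
    (∑ u : K, (∑ y : K, zeta p ^ (absTr p L (b * (F (y + u) - c * F y))).val)
        * zeta p ^ (-(absTr p K (u * x))).val)
      = (∑ y : K, zeta p ^ (absTr p L (b * F y) - absTr p K (x * y)).val)
        * (starRingEnd ℂ)
            (∑ y : K, zeta p ^ (absTr p L (b * c * F y) - absTr p K (x * y)).val) := by
  have key : ∀ a : ZMod p, zeta p ^ a.val = ee p a := fun _ => rfl
  calc (∑ u : K, (∑ y : K, zeta p ^ (absTr p L (b * (F (y + u) - c * F y))).val)
        * zeta p ^ (-(absTr p K (u * x))).val)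
      = ∑ u : K, ∑ y : K, ee p (absTr p L (b * (F (y + u) - c * F y))
          + -(absTr p K (u * x))) := by
        refine Finset.sum_congr rfl fun u _ => ?_
        rw [Finset.sum_mul]
        exact Finset.sum_congr rfl fun y _ => by rw [key, key, ee_add]
    _ = ∑ y : K, ∑ u : K, ee p (absTr p L (b * (F (y + u) - c * F y))
          + -(absTr p K (u * x))) := Finset.sum_comm
    _ = ∑ y : K, ∑ z : K, ee p (absTr p L (b * (F z - c * F y))
          + -(absTr p K ((z - y) * x))) := by
        refine Finset.sum_congr rfl fun y _ => ?_
        refine Fintype.sum_equiv (Equiv.addLeft y) _ _ fun u => ?_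
        simp [Equiv.addLeft]
    _ = ∑ z : K, ∑ y : K, ((ee p (absTr p L (b * F z) - absTr p K (x * z)))
          * ee p (-(absTr p L (b * c * F y) - absTr p K (x * y)))) := by
        rw [Finset.sum_comm]
        refine Finset.sum_congr rfl fun z _ => Finset.sum_congr rfl fun y _ => ?_
        rw [← ee_add]
        congr 1
        have h1 : b * (F z - c * F y) = b * F z - b * c * F y := by ring
        have h2 : (z - y) * x = x * z - x * y := by ring
        rw [h1, h2, absTr_sub, absTr_sub]
        ring
    _ = (∑ y : K, zeta p ^ (absTr p L (b * F y) - absTr p K (x * y)).val)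
        * (starRingEnd ℂ)
            (∑ y : K, zeta p ^ (absTr p L (b * c * F y) - absTr p K (x * y)).val) := by
        rw [map_sum, Finset.sum_mul_sum]
        exact Finset.sum_congr rfl fun z _ => Finset.sum_congr rfl fun y _ => by
          rw [key, key, conj_ee]
end

section
/- Let p be a prime, F : F_{p^n} → F_{p^m}, c ∈ F_{p^m}. Then for all a ∈ F_{p^n} and b ∈ F_{p^m}: Σ_{y ∈ F_{p^n}} W_F(y,b) · conj(W_F(y,bc)) · ζ^{Tr_n(ay)} = p^n · Σ_{x ∈ F_{p^n}} ζ^{Tr_m(b(F(x+a) - c·F(x)))}. Consequently, the c-autocorrelation at (a,b) vanishes if and only if Σ_{y} W_F(y,b) conj(W_F(y,bc)) ζ^{Tr_n(ay)} = 0. -/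
open Finset Complex

/-- `Σ_y W_F(y,b) conj(W_F(y,bc)) ζ^{Tr_n(ay)} = p^n · cC_F(a,b)`; consequently the
c-autocorrelation at (a,b) vanishes iff the left-hand side does. -/
theorem stmt_5 (p n m : ℕ) [Fact p.Prime]
    (K L : Type) [Field K] [Fintype K] [CharP K p] [Field L] [Fintype L] [CharP L p]
    (hK : Fintype.card K = p ^ n) (hL : Fintype.card L = p ^ m)
    (F : K → L) (c : L) (a : K) (b : L) :
    (∑ y : K, (∑ z : K, zeta p ^ (absTr p L (b * F z) - absTr p K (y * z)).val)
        * (starRingEnd ℂ) (∑ z : K, zeta p ^ (absTr p L (b * c * F z) - absTr p K (y * z)).val)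
        * zeta p ^ (absTr p K (a * y)).val)
      = (p : ℂ) ^ n * ∑ x : K, zeta p ^ (absTr p L (b * (F (x + a) - c * F x))).val
    ∧ ((∑ x : K, zeta p ^ (absTr p L (b * (F (x + a) - c * F x))).val) = 0 ↔
        (∑ y : K, (∑ z : K, zeta p ^ (absTr p L (b * F z) - absTr p K (y * z)).val)
          * (starRingEnd ℂ)
              (∑ z : K, zeta p ^ (absTr p L (b * c * F z) - absTr p K (y * z)).val)
          * zeta p ^ (absTr p K (a * y)).val) = 0) := by
  classical
  haveI : NeZero p := ⟨(Fact.out : p.Prime).ne_zero⟩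
  letI : Algebra (ZMod p) K := ZMod.algebra K p
  letI : Algebra (ZMod p) L := ZMod.algebra L p
  have hprim : IsPrimitiveRoot (zeta p) p := Complex.isPrimitiveRoot_exp p (NeZero.ne p)
  set ψ : AddChar (ZMod p) ℂ := AddChar.zmodChar p hprim.pow_eq_one with hψdef
  have hz : ∀ t : ZMod p, zeta p ^ t.val = ψ t := fun t => rfl
  have hψprim : ψ.IsPrimitive := AddChar.zmodChar_primitive_of_primitive_root p hprim
  have hconj : ∀ t : ZMod p, (starRingEnd ℂ) (ψ t) = ψ (-t) := by
    intro t
    rw [AddChar.starComp_apply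
      (by rw [ZMod.ringChar_zmod_n]; exact (Fact.out : p.Prime).pos),
      AddChar.inv_apply]
  -- the additive character of K
  set χ : AddChar K ℂ := ψ.compAddMonoidHom (Algebra.trace (ZMod p) K).toAddMonoidHom with hχdef
  have hχapp : ∀ x : K, χ x = ψ (absTr p K x) := fun x => rfl
  have hχprim : χ.IsPrimitive := by
    intro w hw
    have htr := (traceForm_nondegenerate (ZMod p) K).1 w
    have hnd : ∃ y : K, Algebra.trace (ZMod p) K (w * y) ≠ 0 := by
      by_contra! hf
      simp_rw [← Algebra.traceForm_apply] at hf
      exact hw (htr hf)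
    obtain ⟨y, hy⟩ := hnd
    rw [AddChar.ne_one_iff]
    refine ⟨y, fun hf => hy ?_⟩
    rw [AddChar.mulShift_apply] at hf
    exact (hψprim.zmod_char_eq_one_iff p _).mp hf
  have horth : ∀ u : K, ∑ y : K, ψ (absTr p K (y * u)) = if u = 0 then ((p : ℂ) ^ n) else 0 := by
    intro u
    have := AddChar.sum_mulShift (ψ := χ) u hχprim
    simp_rw [hχapp] at this
    rw [this, hK]
    simp
  -- trace linearity
  have hTsub : ∀ x y : K, absTr p K (x - y) = absTr p K x - absTr p K y := fun x y => map_sub _ x y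
  have hTadd : ∀ x y : K, absTr p K (x + y) = absTr p K x + absTr p K y := fun x y => map_add _ x y
  have hSsub : ∀ x y : L, absTr p L (x - y) = absTr p L x - absTr p L y := fun x y => map_sub _ x y
  have key : (∑ y : K, (∑ z : K, zeta p ^ (absTr p L (b * F z) - absTr p K (y * z)).val)
        * (starRingEnd ℂ) (∑ z : K, zeta p ^ (absTr p L (b * c * F z) - absTr p K (y * z)).val)
        * zeta p ^ (absTr p K (a * y)).val)
      = (p : ℂ) ^ n * ∑ x : K, zeta p ^ (absTr p L (b * (F (x + a) - c * F x))).val := by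
    simp_rw [hz, map_sum, hconj, Finset.sum_mul_sum, Finset.sum_mul,
      ← AddChar.map_add_eq_mul]
    have hArg : ∀ y z w : K,
        absTr p L (b * F z) - absTr p K (y * z) + -(absTr p L (b * c * F w) - absTr p K (y * w)) + absTr p K (a * y)
          = (absTr p L (b * F z) - absTr p L (b * c * F w)) + absTr p K (y * (w - z + a)) := by
      intro y z w
      have : absTr p K (y * (w - z + a)) = absTr p K (y * w) - absTr p K (y * z) + absTr p K (a * y) := by
        have h1 : y * (w - z + a) = y * w - y * z + a * y := by ring
        rw [h1, hTadd, hTsub]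
      rw [this]; ring
    simp_rw [hArg]
    simp_rw [AddChar.map_add_eq_mul]
    have swap : ∀ f : K → K → K → ℂ,
        ∑ y : K, ∑ z : K, ∑ w : K, f y z w = ∑ w : K, ∑ z : K, ∑ y : K, f y z w := by
      intro f
      calc ∑ y : K, ∑ z : K, ∑ w : K, f y z w
          = ∑ y : K, ∑ w : K, ∑ z : K, f y z w :=
            Finset.sum_congr rfl fun _ _ => Finset.sum_comm
        _ = ∑ w : K, ∑ y : K, ∑ z : K, f y z w := Finset.sum_comm
        _ = ∑ w : K, ∑ z : K, ∑ y : K, f y z w :=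
            Finset.sum_congr rfl fun _ _ => Finset.sum_comm
    rw [swap (fun y z w => ψ (absTr p L (b * F z) - absTr p L (b * c * F w)) * ψ (absTr p K (y * (w - z + a))))]
    simp_rw [← Finset.mul_sum, horth]
    have hcond : ∀ z w : K, (w - z + a = 0) ↔ (z = w + a) := by
      intro z w
      constructor <;> intro h <;> linear_combination -h
    simp_rw [mul_ite, mul_zero]
    have inner : ∀ x : K,
        (∑ z : K, if x - z + a = 0 then ψ (absTr p L (b * F z) - absTr p L (b * c * F x)) * (p : ℂ) ^ n else 0)
          = ψ (absTr p L (b * F (x + a)) - absTr p L (b * c * F x)) * (p : ℂ) ^ n := by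
      intro x
      rw [Finset.sum_eq_single (x + a)]
      · rw [if_pos (by ring)]
      · intro z _ hz
        exact if_neg fun h => hz (by linear_combination -h)
      · intro h; exact absurd (Finset.mem_univ _) h
    refine (Finset.sum_congr rfl fun x _ => inner x).trans ?_
    have hargL : ∀ w : K, absTr p L (b * (F (w + a) - c * F w))
        = absTr p L (b * F (w + a)) - absTr p L (b * c * F w) := by
      intro w
      rw [show b * (F (w + a) - c * F w) = b * F (w + a) - b * c * F w by ring, hSsub]
    simp_rw [hargL, Finset.mul_sum]
    exact Finset.sum_congr rfl fun w _ => mul_comm _ _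
  refine ⟨key, ?_⟩
  rw [key]
  have hp0 : ((p : ℂ)) ^ n ≠ 0 := by
    apply pow_ne_zero
    exact_mod_cast (Fact.out : p.Prime).ne_zero
  constructor
  · intro h; rw [h, mul_zero]
  · intro h
    rcases mul_eq_zero.mp h with h' | h'
    · exact absurd h' hp0
    · exact h'
end
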